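/- Let A_t be the category of finite-dimensional nilpotent representations of a cyclic quiver with t vertices, and let C ⊆ A_t be a full subcategory closed under extensions and direct summands. If there is a sequence (X₀, X₁, ..., X_{n-1}, X_n = X₀) of indecomposable objects with Ext¹(X_i, X_{i-1}) ≠ 0 for 1 ≤ i ≤ n, all belonging to C, then C contains a non-exceptional indecomposable object. -/
import Mathlib


open CategoryTheory CategoryTheory.Limits

universe v u

variable (k : Type*) [Field k]

section Defs

variable {A : Type u} [Category.{v} A] [Abelian A] [Linear k A]

/-- `Ext¹(X, Y) = 0`, expressed by the splitting of every short exact sequence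
`0 → Y → M → X → 0`. -/
def Ext1IsZero (X Y : A) : Prop :=
  ∀ (M : A) (i : Y ⟶ M) (p : M ⟶ X) (w : i ≫ p = 0), Mono i → Epi p →
    (ShortComplex.mk i p w).Exact → ∃ r : M ⟶ Y, i ≫ r = 𝟙 Y

end Defs

/-- The `n`-fold composition of an endofunctor. -/
def fpow {A : Type u} [Category.{v} A] (F : A ⥤ A) : ℕ → A ⥤ A
  | 0 => 𝟭 A
  | n + 1 => fpow F n ⋙ F

/-- Data exhibiting an abelian category `A` as `A_t = nilp kÃ_{t-1}`, the category of
finite-dimensional nilpotent representations of the cyclic quiver with `t` vertices over a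
field `k`: a Hom-finite uniserial length `k`-category equipped with an autoequivalence `τ`
of period `t` realizing Serre duality `Ext¹(X, Y) ≅ D Hom(Y, τ X)` (in the form of
simultaneous vanishing), and whose simple objects form a single `τ`-orbit of size `t`. -/
structure NilpTubeData (t : ℕ) (A : Type u) [Category.{v} A] [Abelian A] [Linear k A] where
  homFinite : ∀ X Y : A, FiniteDimensional k (X ⟶ Y)
  finiteLength : ∀ X : A, WellFoundedGT (Subobject X) ∧ WellFoundedLT (Subobject X)
  uniserial : ∀ X : A, Indecomposable X → ∀ a b : Subobject X, a ≤ b ∨ b ≤ a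
  tau : A ≌ A
  serre : ∀ X Y : A, Ext1IsZero (A := A) X Y ↔ ∀ f : Y ⟶ tau.functor.obj X, f = 0
  tau_period : Nonempty (fpow tau.functor t ≅ 𝟭 A)
  S₀ : A
  simple_S₀ : Simple S₀
  simples_orbit : ∀ S : A, Simple S → ∃ i : Fin t, Nonempty (S ≅ (fpow tau.functor i).obj S₀)
  orbit_distinct : ∀ i j : Fin t,
    Nonempty ((fpow tau.functor i).obj S₀ ≅ (fpow tau.functor j).obj S₀) → i = j

variable {A : Type u} [Category.{v} A] [Abelian A] [Linear k A]

theorem aux_split {XA XB M : A} (i : XA ⟶ M) (p : M ⟶ XB) (w : i ≫ p = 0)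
    (hi : Mono i) (hex : (ShortComplex.mk i p w).Exact)
    (s : XB ⟶ M) (hs : s ≫ p = 𝟙 XB) : ∃ r : M ⟶ XA, i ≫ r = 𝟙 XA := by
  let σ := ShortComplex.Splitting.ofExactOfSection _ hex s hs hi
  exact ⟨σ.r, σ.f_r⟩

theorem aux_finrank_lt (homFin : ∀ X Y : A, FiniteDimensional k (X ⟶ Y))
    {V V₁ V₂ : A} (e : V ≅ V₁ ⊞ V₂) (h₂ : ¬ IsZero V₂) :
    Module.finrank k (V₁ ⟶ V₁) < Module.finrank k (V ⟶ V) := by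
  haveI := homFin V V; haveI := homFin V₁ V₁; haveI := homFin V₂ V₂
  have hΦ : Function.Injective (fun fg : (V₁ ⟶ V₁) × (V₂ ⟶ V₂) =>
      e.hom ≫ (biprod.fst ≫ fg.1 ≫ biprod.inl + biprod.snd ≫ fg.2 ≫ biprod.inr) ≫ e.inv) := by
    intro x y hxy
    have h1 := congrArg (fun u => biprod.inl ≫ e.inv ≫ u ≫ e.hom ≫ biprod.fst) hxy
    have h2 := congrArg (fun u => biprod.inr ≫ e.inv ≫ u ≫ e.hom ≫ biprod.snd) hxy
    simp [Preadditive.comp_add, Preadditive.add_comp] at h1 h2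
    exact Prod.ext h1 h2
  let Φ : ((V₁ ⟶ V₁) × (V₂ ⟶ V₂)) →ₗ[k] (V ⟶ V) :=
    { toFun := fun fg =>
        e.hom ≫ (biprod.fst ≫ fg.1 ≫ biprod.inl + biprod.snd ≫ fg.2 ≫ biprod.inr) ≫ e.inv
      map_add' := by intro a b; simp [Preadditive.comp_add, Preadditive.add_comp]; abel
      map_smul' := by intro c a; simp [Linear.smul_comp, Linear.comp_smul] }
  have hinj : Function.Injective Φ := hΦ
  have hle := LinearMap.finrank_le_finrank_of_injective hinj
  rw [Module.finrank_prod] at hle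
  have hpos : 0 < Module.finrank k (V₂ ⟶ V₂) := by
    haveI : Nontrivial (V₂ ⟶ V₂) := ⟨𝟙 V₂, 0, fun h => h₂ ((IsZero.iff_id_eq_zero V₂).mpr h)⟩
    exact Module.finrank_pos
  omega

theorem exists_good_summand
    (uniserial : ∀ X : A, Indecomposable X → ∀ a b : Subobject X, a ≤ b ∨ b ≤ a)
    (homFin : ∀ X Y : A, FiniteDimensional k (X ⟶ Y))
    {XA XB M : A} (hA : Indecomposable XA) (hB : Indecomposable XB)
    (i : XA ⟶ M) (p : M ⟶ XB) (w : i ≫ p = 0) (hi : Mono i) (hp : Epi p)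
    (hex : (ShortComplex.mk i p w).Exact)
    (hns : ∀ r : M ⟶ XA, i ≫ r ≠ 𝟙 XA) :
    ∃ (Z : A) (s : Z ⟶ M) (r : M ⟶ Z), s ≫ r = 𝟙 Z ∧ Indecomposable Z ∧
      (∃ m : XA ⟶ Z, Mono m) ∧ (∃ q : Z ⟶ XB, Epi q) := by
  haveI : Mono (ShortComplex.mk i p w).f := hi
  have mismatch : ∀ (W₁ W₂ : A) (ιa : W₂ ⟶ M) (πb : M ⟶ W₁), Mono (i ≫ πb) → Epi (ιa ≫ p) →
      ιa ≫ πb = 0 → Mono ιa → False := by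
    intro W₁ W₂ ιa πb hm he hcross hmono
    have hmono2 : Mono (ιa ≫ p) := by
      apply Preadditive.mono_of_cancel_zero
      intro P g hg
      have hg' : (g ≫ ιa) ≫ (ShortComplex.mk i p w).g = 0 := by
        simpa [Category.assoc] using hg
      have hl : hex.lift (g ≫ ιa) hg' ≫ i = g ≫ ιa := hex.lift_f _ _
      have h0 : hex.lift (g ≫ ιa) hg' ≫ (i ≫ πb) = 0 := by
        rw [← Category.assoc, hl, Category.assoc, hcross, comp_zero]
      have hl0 : hex.lift (g ≫ ιa) hg' = 0 := zero_of_comp_mono _ h0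
      have : g ≫ ιa = 0 := by rw [← hl, hl0, zero_comp]
      exact zero_of_comp_mono _ this
    haveI := hmono2; haveI := he
    haveI := isIso_of_mono_of_epi (ιa ≫ p)
    obtain ⟨r, hr⟩ := aux_split i p w hi hex (inv (ιa ≫ p) ≫ ιa)
      (by rw [Category.assoc]; exact IsIso.inv_hom_id _)
    exact hns r hr
  suffices H : ∀ (N : ℕ) (V : A) (ι : V ⟶ M) (π : M ⟶ V),
      Module.finrank k (V ⟶ V) ≤ N → ι ≫ π = 𝟙 V → Mono (i ≫ π) → Epi (ι ≫ p) →
      ∃ (Z : A) (s : Z ⟶ M) (r : M ⟶ Z), s ≫ r = 𝟙 Z ∧ Indecomposable Z ∧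
        (∃ m : XA ⟶ Z, Mono m) ∧ (∃ q : Z ⟶ XB, Epi q) by
    exact H (Module.finrank k (M ⟶ M)) M (𝟙 M) (𝟙 M) le_rfl (Category.comp_id _)
      (by simpa using hi) (by simpa using hp)
  intro N
  induction N with
  | zero =>
      intro V ι π hrank hιπ hmono hepi
      by_cases hV : Indecomposable V
      · exact ⟨V, ι, π, hιπ, hV, ⟨i ≫ π, hmono⟩, ⟨ι ≫ p, hepi⟩⟩
      have hnz : ¬ IsZero V := by
        intro hz
        have h0 : i ≫ π = 0 := hz.eq_of_tgt _ _
        have : 𝟙 XA ≫ (i ≫ π) = 0 ≫ (i ≫ π) := by rw [h0]; simp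
        exact hA.1 ((IsZero.iff_id_eq_zero XA).mpr ((cancel_mono (i ≫ π)).1 this))
      haveI := homFin V V
      haveI : Nontrivial (V ⟶ V) := ⟨𝟙 V, 0, fun h => hnz ((IsZero.iff_id_eq_zero V).mpr h)⟩
      have := Module.finrank_pos (R := k) (M := V ⟶ V)
      omega
  | succ N IH =>
      intro V ι π hrank hιπ hmono hepi
      by_cases hV : Indecomposable V
      · exact ⟨V, ι, π, hιπ, hV, ⟨i ≫ π, hmono⟩, ⟨ι ≫ p, hepi⟩⟩
      have hnz : ¬ IsZero V := by
        intro hz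
        have h0 : i ≫ π = 0 := hz.eq_of_tgt _ _
        have : 𝟙 XA ≫ (i ≫ π) = 0 ≫ (i ≫ π) := by rw [h0]; simp
        exact hA.1 ((IsZero.iff_id_eq_zero XA).mpr ((cancel_mono (i ≫ π)).1 this))
      have hdec : ∃ (V₁ V₂ : A) (e : V ≅ V₁ ⊞ V₂), ¬ IsZero V₁ ∧ ¬ IsZero V₂ := by
        by_contra hcon
        push_neg at hcon
        exact hV ⟨hnz, fun Y Z e => by
          by_cases h1 : IsZero Y
          · exact Or.inl h1
          · exact Or.inr (hcon Y Z e h1)⟩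
      obtain ⟨V₁, V₂, e, hV1, hV2⟩ := hdec
      set ι₁ : V₁ ⟶ M := biprod.inl ≫ e.inv ≫ ι with hι₁
      set ι₂ : V₂ ⟶ M := biprod.inr ≫ e.inv ≫ ι with hι₂
      set π₁ : M ⟶ V₁ := π ≫ e.hom ≫ biprod.fst with hπ₁
      set π₂ : M ⟶ V₂ := π ≫ e.hom ≫ biprod.snd with hπ₂
      have h11 : ι₁ ≫ π₁ = 𝟙 V₁ := by
        rw [hι₁, hπ₁]
        slice_lhs 3 4 => rw [hιπ]
        simp
      have h22 : ι₂ ≫ π₂ = 𝟙 V₂ := by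
        rw [hι₂, hπ₂]
        slice_lhs 3 4 => rw [hιπ]
        simp
      have h12 : ι₁ ≫ π₂ = 0 := by
        rw [hι₁, hπ₂]
        slice_lhs 3 4 => rw [hιπ]
        simp
      have h21 : ι₂ ≫ π₁ = 0 := by
        rw [hι₂, hπ₁]
        slice_lhs 3 4 => rw [hιπ]
        simp
      haveI : Mono ι := Preadditive.mono_of_cancel_zero _ (fun g hg => by
        have h := congrArg (fun u => u ≫ π) hg
        simpa [hιπ] using h)
      haveI : Mono ι₁ := by rw [hι₁]; infer_instance
      haveI : Mono ι₂ := by rw [hι₂]; infer_instance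
      -- joint vanishing for the projections
      have joint : ∀ {T : A} (x : T ⟶ M), x ≫ π₁ = 0 → x ≫ π₂ = 0 → x ≫ π = 0 := by
        intro T x hx1 hx2
        have h3 : (x ≫ π) ≫ e.hom = 0 := by
          apply biprod.hom_ext
          · simpa [hπ₁] using hx1
          · simpa [hπ₂] using hx2
        calc x ≫ π = ((x ≫ π) ≫ e.hom) ≫ e.inv := by simp
        _ = 0 := by rw [h3, zero_comp]
      -- joint generation for the inclusions
      have jgen : ∀ (o : Prop), ∃ α β, ι ≫ p = α ≫ (ι₁ ≫ p) + β ≫ (ι₂ ≫ p) := by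
        intro _
        refine ⟨e.hom ≫ biprod.fst, e.hom ≫ biprod.snd, ?_⟩
        have htot : e.hom ≫ (biprod.fst ≫ biprod.inl + biprod.snd ≫ biprod.inr) ≫ e.inv = 𝟙 V := by
          rw [biprod.total]; simp
        have h := congrArg (fun u => u ≫ (ι ≫ p)) htot
        simp only [Preadditive.add_comp, Preadditive.comp_add, Category.assoc,
          Category.id_comp] at h
        rw [hι₁, hι₂]
        simp only [Category.assoc]
        exact h.symm
      -- selection of a mono component
      have main : ∀ (W₁ W₂ : A) (πa : M ⟶ W₁) (πb : M ⟶ W₂),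
          (∀ {T : A} (x : T ⟶ M), x ≫ πa = 0 → x ≫ πb = 0 → x ≫ π = 0) →
          kernelSubobject (i ≫ πa) ≤ kernelSubobject (i ≫ πb) → Mono (i ≫ πa) := by
        intro W₁ W₂ πa πb hjoint hle
        apply Preadditive.mono_of_cancel_zero
        intro P g hg
        have ha : (kernelSubobject (i ≫ πa)).arrow ≫ (i ≫ πa) = 0 :=
          kernelSubobject_arrow_comp _
        have hb : (kernelSubobject (i ≫ πa)).arrow ≫ (i ≫ πb) = 0 := by
          rw [← Subobject.ofLE_arrow hle, Category.assoc, kernelSubobject_arrow_comp, comp_zero]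
        have hcomp : ((kernelSubobject (i ≫ πa)).arrow ≫ i) ≫ π = 0 := by
          apply hjoint
          · rw [Category.assoc]; exact ha
          · rw [Category.assoc]; exact hb
        rw [Category.assoc] at hcomp
        have harrow : (kernelSubobject (i ≫ πa)).arrow = 0 := zero_of_comp_mono (i ≫ π) hcomp
        rw [← factorThruKernelSubobject_comp_arrow (i ≫ πa) g hg, harrow, comp_zero]
      have hsel1 : Mono (i ≫ π₁) ∨ Mono (i ≫ π₂) := by
        rcases uniserial XA hA (kernelSubobject (i ≫ π₁)) (kernelSubobject (i ≫ π₂)) with hle | hle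
        · exact Or.inl (main V₁ V₂ π₁ π₂ (fun x h1 h2 => joint x h1 h2) hle)
        · exact Or.inr (main V₂ V₁ π₂ π₁ (fun x h1 h2 => joint x h2 h1) hle)
      -- selection of an epi component
      have maine : ∀ (W₁ W₂ : A) (ιa : W₁ ⟶ M) (ιb : W₂ ⟶ M),
          (∃ (α : V ⟶ W₁) (β : V ⟶ W₂), ι ≫ p = α ≫ (ιa ≫ p) + β ≫ (ιb ≫ p)) →
          imageSubobject (ιa ≫ p) ≤ imageSubobject (ιb ≫ p) → Epi (ιb ≫ p) := by
        intro W₁ W₂ ιa ιb ⟨α, β, hαβ⟩ hle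
        have f1 : ιa ≫ p = factorThruImageSubobject (ιa ≫ p) ≫
            Subobject.ofLE _ _ hle ≫ (imageSubobject (ιb ≫ p)).arrow := by
          rw [Subobject.ofLE_arrow hle, imageSubobject_arrow_comp]
        have f2 : ιb ≫ p = factorThruImageSubobject (ιb ≫ p) ≫
            (imageSubobject (ιb ≫ p)).arrow := (imageSubobject_arrow_comp _).symm
        have hfac : ι ≫ p = (α ≫ factorThruImageSubobject (ιa ≫ p) ≫ Subobject.ofLE _ _ hle
            + β ≫ factorThruImageSubobject (ιb ≫ p)) ≫ (imageSubobject (ιb ≫ p)).arrow := by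
          rw [hαβ]
          simp only [Preadditive.add_comp, Category.assoc, Subobject.ofLE_arrow,
            imageSubobject_arrow_comp]
        haveI : Epi ((α ≫ factorThruImageSubobject (ιa ≫ p) ≫ Subobject.ofLE _ _ hle
            + β ≫ factorThruImageSubobject (ιb ≫ p)) ≫ (imageSubobject (ιb ≫ p)).arrow) := by
          have h' : Epi (ι ≫ p) := hepi
          rwa [hfac] at h'
        haveI : Epi (imageSubobject (ιb ≫ p)).arrow :=
          epi_of_epi (α ≫ factorThruImageSubobject (ιa ≫ p) ≫ Subobject.ofLE _ _ hle
            + β ≫ factorThruImageSubobject (ιb ≫ p)) ((imageSubobject (ιb ≫ p)).arrow)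
        haveI := isIso_of_mono_of_epi (imageSubobject (ιb ≫ p)).arrow
        rw [f2]
        exact epi_comp _ _
      have hsel2 : Epi (ι₁ ≫ p) ∨ Epi (ι₂ ≫ p) := by
        rcases uniserial XB hB (imageSubobject (ι₁ ≫ p)) (imageSubobject (ι₂ ≫ p)) with hle | hle
        · refine Or.inr (maine V₁ V₂ ι₁ ι₂ (jgen True) hle)
        · refine Or.inl (maine V₂ V₁ ι₂ ι₁ ?_ hle)
          obtain ⟨α, β, h⟩ := jgen True
          exact ⟨β, α, by rw [h]; abel⟩
      have hr1 : Module.finrank k (V₁ ⟶ V₁) ≤ N := by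
        have := aux_finrank_lt k homFin e hV2; omega
      have hr2 : Module.finrank k (V₂ ⟶ V₂) ≤ N := by
        have := aux_finrank_lt k homFin (e.trans (biprod.braiding V₁ V₂)) hV1; omega
      rcases hsel1 with hm | hm
      · rcases hsel2 with heq | heq
        · exact IH V₁ ι₁ π₁ hr1 h11 hm heq
        · exact absurd (mismatch V₁ V₂ ι₂ π₁ hm heq h21 inferInstance) not_false
      · rcases hsel2 with heq | heq
        · exact absurd (mismatch V₂ V₁ ι₁ π₂ hm heq h12 inferInstance) not_false
        · exact IH V₂ ι₂ π₂ hr2 h22 hm heq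

theorem key_cycle (t : ℕ) (ND : NilpTubeData k t A) (C : A → Prop)
    (hExt : ∀ (X Y Z : A) (i : X ⟶ Y) (p : Y ⟶ Z) (w : i ≫ p = 0), Mono i → Epi p →
      (ShortComplex.mk i p w).Exact → C X → C Z → C Y)
    (hSummand : ∀ X Y : A, (∃ (s : X ⟶ Y) (r : Y ⟶ X), s ≫ r = 𝟙 X) → C Y → C X)
    (n : ℕ) (hn : 1 ≤ n) :
    ∀ X : ℕ → A, Nonempty (X n ≅ X 0) →
      (∀ i, i ≤ n → Indecomposable (X i)) → (∀ i, i ≤ n → C (X i)) →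
      (∀ i, 1 ≤ i → i ≤ n → ∃ f : X (i-1) ⟶ ND.tau.functor.obj (X i), f ≠ 0) →
      ∃ Y : A, C Y ∧ Indecomposable Y ∧ ¬ Ext1IsZero (A := A) Y Y := by
  haveI : (ND.tau.functor).PreservesMonomorphisms :=
    Functor.preservesMonomorphisms_of_adjunction ND.tau.symm.toAdjunction
  induction n, hn using Nat.le_induction with
  | base =>
      intro X hcyc hind hC hf
      obtain ⟨f, hf0⟩ := hf 1 le_rfl le_rfl
      obtain ⟨iso⟩ := hcyc
      refine ⟨X 0, hC 0 (by omega), hind 0 (by omega), ?_⟩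
      intro h
      rw [ND.serre] at h
      have h1 := h (f ≫ ND.tau.functor.map iso.hom)
      apply hf0
      have h2 := congrArg (fun u => u ≫ ND.tau.functor.map iso.inv) h1
      simpa [← Functor.map_comp, Category.assoc] using h2
  | succ n hn1 IH =>
      intro X hcyc hind hC hf
      obtain ⟨iso⟩ := hcyc
      obtain ⟨fn1, hfn1⟩ := hf (n+1) (by omega) le_rfl
      have hnot : ¬ Ext1IsZero (A := A) (X (n+1)) (X n) := by
        rw [ND.serre]; push_neg; exact ⟨fn1, hfn1⟩
      rw [Ext1IsZero] at hnot
      push_neg at hnot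
      obtain ⟨M, i, p, w, hi, hp, hexact, hns⟩ := hnot
      have hCM : C M := hExt _ _ _ i p w hi hp hexact (hC n (by omega)) (hC (n+1) le_rfl)
      obtain ⟨Z, s, r, hsr, hZ, ⟨m, hm⟩, ⟨q, hq⟩⟩ :=
        exists_good_summand k ND.uniserial ND.homFinite (hind n (by omega))
          (hind (n+1) le_rfl) i p w hi hp hexact hns
      have hCZ : C Z := hSummand Z M ⟨s, r, hsr⟩ hCM
      haveI := hm
      haveI : Mono (ND.tau.functor.map m) := inferInstance
      haveI := hq
      set X' : ℕ → A := fun j => if j = 0 then Z else if j = n then Z else X j with hX'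
      have e0 : X' 0 = Z := by simp [hX']
      have en : X' n = Z := by simp [hX', Nat.one_le_iff_ne_zero.mp hn1]
      have emid : ∀ j, j ≠ 0 → j ≠ n → X' j = X j := by
        intro j h1 h2; simp [hX', h1, h2]
      apply IH X'
      · rw [en, e0]; exact ⟨Iso.refl Z⟩
      · intro j hj
        by_cases h0 : j = 0
        · rw [h0, e0]; exact hZ
        · by_cases h1 : j = n
          · rw [h1, en]; exact hZ
          · rw [emid j h0 h1]; exact hind j (by omega)
      · intro j hj
        by_cases h0 : j = 0
        · rw [h0, e0]; exact hCZ
        · by_cases h1 : j = n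
          · rw [h1, en]; exact hCZ
          · rw [emid j h0 h1]; exact hC j (by omega)
      · intro j hj1 hjn
        by_cases hj : j = 1
        · subst hj
          obtain ⟨f1, hf1⟩ := hf 1 le_rfl (by omega)
          by_cases hone : n = 1
          · subst hone
            have e0' : X' (1 - 1) = Z := e0
            rw [e0', en]
            refine ⟨q ≫ (iso.hom ≫ (f1 ≫ ND.tau.functor.map m)), ?_⟩
            intro hg
            have hg' : q ≫ (iso.hom ≫ (f1 ≫ ND.tau.functor.map m)) = q ≫ 0 := by
              rw [hg, comp_zero]
            have h2 : iso.hom ≫ (f1 ≫ ND.tau.functor.map m) = 0 := by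
              have := (cancel_epi q).1 hg'
              simpa using this
            have h2' : iso.hom ≫ (f1 ≫ ND.tau.functor.map m) = iso.hom ≫ 0 := by
              rw [h2, comp_zero]
            have h3 : f1 ≫ ND.tau.functor.map m = 0 := by
              have := (cancel_epi iso.hom).1 h2'
              simpa using this
            exact hf1 (zero_of_comp_mono _ h3)
          · have e1 : X' 1 = X 1 := emid 1 (by omega) (fun h => hone h.symm)
            have e0' : X' (1 - 1) = Z := e0
            rw [e0', e1]
            refine ⟨q ≫ (iso.hom ≫ f1), ?_⟩
            intro hg
            have hg' : q ≫ (iso.hom ≫ f1) = q ≫ 0 := by rw [hg, comp_zero]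
            have h2 : iso.hom ≫ f1 = 0 := by
              have := (cancel_epi q).1 hg'
              simpa using this
            have h2' : iso.hom ≫ f1 = iso.hom ≫ 0 := by rw [h2, comp_zero]
            have h3 : f1 = 0 := by
              have := (cancel_epi iso.hom).1 h2'
              simpa using this
            exact hf1 h3
        · by_cases hjn' : j = n
          · subst hjn'
            obtain ⟨fn, hfn⟩ := hf j (by omega) (by omega)
            have e1 : X' (j-1) = X (j-1) := emid (j-1) (by omega) (by omega)
            rw [e1, en]
            refine ⟨fn ≫ ND.tau.functor.map m, ?_⟩
            intro hg
            exact hfn (zero_of_comp_mono _ hg)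
          · have e1 : X' (j-1) = X (j-1) := emid (j-1) (by omega) (by omega)
            have e2 : X' j = X j := emid j (by omega) hjn'
            rw [e1, e2]
            exact hf j (by omega) (by omega)

/-- Let `C ⊆ A_t` be a full subcategory (given by a predicate) closed under extensions and
direct summands.  If there is a cyclic sequence `(X₀, X₁, …, X_{n-1}, X_n = X₀)` of
indecomposable objects of `C` with `Ext¹(X_i, X_{i-1}) ≠ 0` for `1 ≤ i ≤ n`, then `C`
contains a non-exceptional indecomposable object. -/
theorem nonexceptional_of_ext_cycle
    (t : ℕ) (ht : 0 < t) (ND : NilpTubeData k t A)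
    (C : A → Prop)
    (hExt : ∀ (X Y Z : A) (i : X ⟶ Y) (p : Y ⟶ Z) (w : i ≫ p = 0), Mono i → Epi p →
      (ShortComplex.mk i p w).Exact → C X → C Z → C Y)
    (hSummand : ∀ X Y : A, (∃ (s : X ⟶ Y) (r : Y ⟶ X), s ≫ r = 𝟙 X) → C Y → C X)
    (n : ℕ) (hn : 0 < n) (X : Fin (n + 1) → A)
    (hcycle : Nonempty (X (Fin.last n) ≅ X 0))
    (hind : ∀ i, Indecomposable (X i))
    (hC : ∀ i, C (X i))
    (hext : ∀ i : Fin n, ¬ Ext1IsZero (A := A) (X i.succ) (X i.castSucc)) :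
    ∃ Y : A, C Y ∧ Indecomposable Y ∧ ¬ Ext1IsZero (A := A) Y Y := by
  obtain ⟨X', hdef⟩ : ∃ X' : ℕ → A, ∀ (i : ℕ) (h : i ≤ n), X' i = X ⟨i, Nat.lt_succ_of_le h⟩ :=
    ⟨fun i => if h : i ≤ n then X ⟨i, Nat.lt_succ_of_le h⟩ else X 0, fun i h => dif_pos h⟩
  apply key_cycle k t ND C hExt hSummand n hn X'
  · rw [hdef n le_rfl, hdef 0 (Nat.zero_le n)]
    have h0 : X ⟨0, Nat.lt_succ_of_le (Nat.zero_le n)⟩ = X 0 := congrArg X (by ext; simp)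
    have hl : X ⟨n, Nat.lt_succ_of_le le_rfl⟩ = X (Fin.last n) := congrArg X (by ext; simp)
    rw [h0, hl]
    exact hcycle
  · intro i hi
    rw [hdef i hi]
    exact hind _
  · intro i hi
    rw [hdef i hi]
    exact hC _
  · intro i h1 h2
    have hj := hext ⟨i - 1, by omega⟩
    have hsucc : (⟨i - 1, by omega⟩ : Fin n).succ = (⟨i, Nat.lt_succ_of_le h2⟩ : Fin (n+1)) := by
      ext; simp; omega
    have hcast : (⟨i - 1, by omega⟩ : Fin n).castSucc
        = (⟨i - 1, Nat.lt_succ_of_le (show i - 1 ≤ n by omega)⟩ : Fin (n+1)) := by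
      ext; simp
    rw [hsucc, hcast] at hj
    rw [ND.serre] at hj
    push_neg at hj
    obtain ⟨f, hf⟩ := hj
    rw [hdef i h2]
    rw [hdef (i-1) (by omega)]
    exact ⟨f, hf⟩
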